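/- arXiv:2207.12048 — 2 statements merged into one kernel-verified Lean document; each statement's English description precedes it below -/
import Mathlib

section
/- Let (Ω, F₀, P) be a probability space, m, ℓ ∈ ℕ with ℓ ≥ 1, λ positive weights on ℝ^m, and Y : Ω → ℝ^m measurable with E[‖Y‖_λ²] < ∞. Suppose Γ* = (γ*₁,…,γ*_ℓ) ∈ (ℝ^m)^ℓ minimizes the quantization error e(Γ) over all tuples Γ ∈ (ℝ^m)^ℓ. Then the nearest-prototype image q_{Γ*}(Y) equals the conditional expectation of Y given the σ-algebra generated by q_{Γ*}(Y), P-almost surely: q_{Γ*}∘Y = E[Y ∣ σ(q_{Γ*}∘Y)] a.e. -/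
open MeasureTheory Finset

set_option maxHeartbeats 1000000

noncomputable section

/-- The weighted inner product `⟨y,y'⟩_λ = ∑ i, λᵢ yᵢ y'ᵢ` on `ℝ^m`. -/
def wip {m : ℕ} (lam : Fin m → ℝ) (y y' : Fin m → ℝ) : ℝ := ∑ i, lam i * y i * y' i

/-- The squared weighted norm `‖y‖_λ²`. -/
def wnormSq {m : ℕ} (lam : Fin m → ℝ) (y : Fin m → ℝ) : ℝ := wip lam y y

/-- The weighted norm `‖y‖_λ`. -/
def wnorm {m : ℕ} (lam : Fin m → ℝ) (y : Fin m → ℝ) : ℝ := Real.sqrt (wnormSq lam y)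

/-- The set of indices minimizing `‖y - γᵢ‖_λ`. -/
def minimizers {m ℓ : ℕ} (lam : Fin m → ℝ) (Γ : Fin ℓ → Fin m → ℝ) (y : Fin m → ℝ) :
    Finset (Fin ℓ) :=
  Finset.univ.filter fun i => ∀ j, wnorm lam (y - Γ i) ≤ wnorm lam (y - Γ j)

lemma minimizers_nonempty {m ℓ : ℕ} [NeZero ℓ] (lam : Fin m → ℝ) (Γ : Fin ℓ → Fin m → ℝ)
    (y : Fin m → ℝ) : (minimizers lam Γ y).Nonempty := by
  obtain ⟨i, -, hi⟩ := Finset.exists_min_image Finset.univ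
    (fun i => wnorm lam (y - Γ i)) ⟨0, Finset.mem_univ _⟩
  exact ⟨i, by simpa [minimizers] using fun j => hi j (Finset.mem_univ j)⟩

/-- The nearest-prototype map `q_Γ`: sends `y` to `γ_{i(y)}` where `i(y)` is the smallest
index minimizing `‖y - γᵢ‖_λ`. -/
def q {m ℓ : ℕ} [NeZero ℓ] (lam : Fin m → ℝ) (Γ : Fin ℓ → Fin m → ℝ) (y : Fin m → ℝ) :
    Fin m → ℝ :=
  Γ ((minimizers lam Γ y).min' (minimizers_nonempty lam Γ y))

/-- The quantization error `e(Γ) = (E[minᵢ ‖Y - γᵢ‖_λ²])^{1/2}`. -/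
def quantErr {m ℓ : ℕ} [NeZero ℓ] (lam : Fin m → ℝ) (Γ : Fin ℓ → Fin m → ℝ)
    {Ω : Type*} [MeasurableSpace Ω] (μ : Measure Ω) (Y : Ω → Fin m → ℝ) : ℝ :=
  Real.sqrt (∫ ω, ⨅ i, (wnorm lam (Y ω - Γ i)) ^ 2 ∂μ)

namespace OQ

variable {m ℓ : ℕ} [NeZero ℓ] {lam : Fin m → ℝ} {Γ : Fin ℓ → Fin m → ℝ}

/-- index of nearest prototype -/
def idx (lam : Fin m → ℝ) (Γ : Fin ℓ → Fin m → ℝ) (y : Fin m → ℝ) : Fin ℓ :=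
  (minimizers lam Γ y).min' (minimizers_nonempty lam Γ y)

lemma q_eq (y : Fin m → ℝ) : q lam Γ y = Γ (idx lam Γ y) := rfl

lemma wnormSq_nonneg (hlam : ∀ i, 0 < lam i) (y : Fin m → ℝ) : 0 ≤ wnormSq lam y := by
  unfold wnormSq wip
  refine Finset.sum_nonneg fun i _ => ?_
  have := (hlam i).le
  nlinarith [sq_nonneg (y i)]

lemma wnormSq_pos (hlam : ∀ i, 0 < lam i) {y : Fin m → ℝ} (hy : y ≠ 0) :
    0 < wnormSq lam y := by
  rcases (wnormSq_nonneg hlam y).lt_or_eq with h | h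
  · exact h
  · exfalso
    apply hy
    have h0 : ∀ i ∈ Finset.univ, (0:ℝ) ≤ lam i * y i * y i := fun i _ => by
      have := (hlam i).le; nlinarith [sq_nonneg (y i)]
    have := (Finset.sum_eq_zero_iff_of_nonneg h0).mp h.symm
    funext i
    have hi := this i (Finset.mem_univ i)
    have hyi : y i * y i = 0 := by
      have hl := (hlam i).ne'
      have h2 : y i * y i = (lam i)⁻¹ * (lam i * y i * y i) := by field_simp
      rw [h2, hi, mul_zero]
    show y i = 0
    exact mul_self_eq_zero.mp hyi

lemma sq_wnorm (hlam : ∀ i, 0 < lam i) (y : Fin m → ℝ) :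
    wnorm lam y ^ 2 = wnormSq lam y :=
  Real.sq_sqrt (wnormSq_nonneg hlam y)

lemma wnormSq_le_of_wnorm_le (hlam : ∀ i, 0 < lam i) {a b : Fin m → ℝ}
    (h : wnorm lam a ≤ wnorm lam b) : wnormSq lam a ≤ wnormSq lam b := by
  rw [← sq_wnorm hlam, ← sq_wnorm hlam]
  exact pow_le_pow_left₀ (Real.sqrt_nonneg _) h 2

lemma idx_mem (y : Fin m → ℝ) : idx lam Γ y ∈ minimizers lam Γ y :=
  Finset.min'_mem _ _

lemma idx_min (y : Fin m → ℝ) (j : Fin ℓ) :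
    wnorm lam (y - Γ (idx lam Γ y)) ≤ wnorm lam (y - Γ j) := by
  have := idx_mem (lam := lam) (Γ := Γ) y
  simp only [minimizers, Finset.mem_filter] at this
  exact this.2 j

lemma wnormSq_add (u v : Fin m → ℝ) :
    wnormSq lam (u + v) = wnormSq lam u + 2 * wip lam u v + wnormSq lam v := by
  simp only [wnormSq, wip, Pi.add_apply, Finset.mul_sum, ← Finset.sum_add_distrib]
  refine Finset.sum_congr rfl fun i _ => by ring

lemma continuous_wnormSq_sub (v : Fin m → ℝ) :
    Continuous fun y : Fin m → ℝ => wnormSq lam (y - v) := by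
  unfold wnormSq wip
  exact continuous_finset_sum _ fun i _ => by fun_prop

lemma continuous_wnorm_sub (v : Fin m → ℝ) :
    Continuous fun y : Fin m → ℝ => wnorm lam (y - v) :=
  Real.continuous_sqrt.comp (continuous_wnormSq_sub v)

lemma measurableSet_mem_minimizers (i : Fin ℓ) :
    MeasurableSet {y : Fin m → ℝ | i ∈ minimizers lam Γ y} := by
  have : {y : Fin m → ℝ | i ∈ minimizers lam Γ y} =
      ⋂ j, {y | wnorm lam (y - Γ i) ≤ wnorm lam (y - Γ j)} := by
    ext y; simp [minimizers]
  rw [this]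
  refine MeasurableSet.iInter fun j => ?_
  have hc : IsClosed {y : Fin m → ℝ | wnorm lam (y - Γ i) ≤ wnorm lam (y - Γ j)} :=
    isClosed_le (continuous_wnorm_sub (Γ i)) (continuous_wnorm_sub (Γ j))
  exact hc.measurableSet

lemma measurable_idx : Measurable (idx lam Γ) := by
  apply measurable_to_countable'
  intro j
  have : idx lam Γ ⁻¹' {j} =
      {y : Fin m → ℝ | j ∈ minimizers lam Γ y} ∩
        ⋂ k : Fin ℓ, {y | k ∈ minimizers lam Γ y → j ≤ k} := by
    ext y
    simp only [Set.mem_preimage, Set.mem_singleton_iff, Set.mem_inter_iff, Set.mem_iInter,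
      Set.mem_setOf_eq]
    constructor
    · rintro rfl
      exact ⟨idx_mem y, fun k hk => Finset.min'_le _ _ hk⟩
    · rintro ⟨hj, hle⟩
      exact le_antisymm (Finset.min'_le _ _ hj) (Finset.le_min' _ _ _ fun k hk => hle k hk)
  rw [this]
  refine (measurableSet_mem_minimizers j).inter (MeasurableSet.iInter fun k => ?_)
  by_cases h : j ≤ k
  · have : {y : Fin m → ℝ | k ∈ minimizers lam Γ y → j ≤ k} = Set.univ := by
      ext y; simp [h]
    rw [this]; exact MeasurableSet.univ
  · have : {y : Fin m → ℝ | k ∈ minimizers lam Γ y → j ≤ k} =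
        {y : Fin m → ℝ | k ∈ minimizers lam Γ y}ᶜ := by
      ext y; simp [h]
    rw [this]; exact (measurableSet_mem_minimizers k).compl

lemma measurable_q : Measurable (q lam Γ) := by
  have : q lam Γ = Γ ∘ idx lam Γ := rfl
  rw [this]
  exact (measurable_from_top).comp measurable_idx

end OQ

namespace OQ

variable {m ℓ : ℕ} [NeZero ℓ] {lam : Fin m → ℝ} {Γ : Fin ℓ → Fin m → ℝ}
variable {Ω : Type*} [MeasurableSpace Ω] {μ : Measure Ω} {Y : Ω → Fin m → ℝ}

lemma measurable_comp' (hYmeas : Measurable Y) (k : Fin m) :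
    Measurable fun ω => Y ω k := (measurable_pi_apply k).comp hYmeas

lemma integrable_comp_sq (hlam : ∀ i, 0 < lam i) (hYmeas : Measurable Y)
    (hY2 : Integrable (fun ω => wnormSq lam (Y ω)) μ) (k : Fin m) :
    Integrable (fun ω => (Y ω k) ^ 2) μ := by
  have hb : ∀ ω, lam k * (Y ω k) ^ 2 ≤ wnormSq lam (Y ω) := by
    intro ω
    have : lam k * Y ω k * Y ω k ≤ wnormSq lam (Y ω) := by
      unfold wnormSq wip
      refine Finset.single_le_sum (f := fun i => lam i * Y ω i * Y ω i) (fun i _ => ?_)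
        (Finset.mem_univ k)
      show (0:ℝ) ≤ lam i * Y ω i * Y ω i
      have := (hlam i).le; nlinarith [sq_nonneg (Y ω i)]
    calc lam k * (Y ω k) ^ 2 = lam k * Y ω k * Y ω k := by ring
    _ ≤ _ := this
  have h1 : Integrable (fun ω => lam k * (Y ω k) ^ 2) μ := by
    refine hY2.mono' ?_ (Filter.Eventually.of_forall fun ω => ?_)
    · exact (((measurable_comp' hYmeas k).pow_const 2).const_mul _).aestronglyMeasurable
    · have h2 : (0:ℝ) ≤ lam k * (Y ω k) ^ 2 := by
        have := (hlam k).le; positivity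
      rw [Real.norm_eq_abs, abs_of_nonneg h2]
      exact hb ω
  have h2 := h1.const_mul (lam k)⁻¹
  have : (fun ω => (lam k)⁻¹ * (lam k * (Y ω k) ^ 2)) = fun ω => (Y ω k) ^ 2 := by
    funext ω
    rw [← mul_assoc, inv_mul_cancel₀ (hlam k).ne', one_mul]
  rwa [this] at h2

lemma integrable_comp [IsFiniteMeasure μ] (hlam : ∀ i, 0 < lam i) (hYmeas : Measurable Y)
    (hY2 : Integrable (fun ω => wnormSq lam (Y ω)) μ) (k : Fin m) :
    Integrable (fun ω => Y ω k) μ := by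
  refine ((integrable_const (1:ℝ)).add (integrable_comp_sq hlam hYmeas hY2 k)).mono'
    (measurable_comp' hYmeas k).aestronglyMeasurable
    (Filter.Eventually.of_forall fun ω => ?_)
  rw [Real.norm_eq_abs]
  simp only [Pi.add_apply]
  nlinarith [sq_abs (Y ω k), sq_nonneg (|Y ω k| - 1), abs_nonneg (Y ω k)]

lemma wnormSq_sub_expand (v : Fin m → ℝ) (x : Fin m → ℝ) :
    wnormSq lam (x - v) = ∑ k, (lam k * (x k) ^ 2 - 2 * lam k * v k * x k + lam k * v k * v k) := by
  unfold wnormSq wip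
  exact Finset.sum_congr rfl fun k _ => by simp [Pi.sub_apply]; ring

lemma integrable_wnormSq_sub [IsFiniteMeasure μ] (hlam : ∀ i, 0 < lam i)
    (hYmeas : Measurable Y) (hY2 : Integrable (fun ω => wnormSq lam (Y ω)) μ)
    (v : Fin m → ℝ) : Integrable (fun ω => wnormSq lam (Y ω - v)) μ := by
  have : (fun ω => wnormSq lam (Y ω - v)) = fun ω =>
      ∑ k, (lam k * (Y ω k) ^ 2 - 2 * lam k * v k * (Y ω k) + lam k * v k * v k) := by
    funext ω; exact wnormSq_sub_expand v (Y ω)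
  rw [this]
  refine integrable_finset_sum _ fun k _ => ?_
  exact (((integrable_comp_sq hlam hYmeas hY2 k).const_mul _).sub
    ((integrable_comp hlam hYmeas hY2 k).const_mul _)).add (integrable_const _)

lemma integrable_wip_sub [IsFiniteMeasure μ] (hlam : ∀ i, 0 < lam i)
    (hYmeas : Measurable Y) (hY2 : Integrable (fun ω => wnormSq lam (Y ω)) μ)
    (v w : Fin m → ℝ) : Integrable (fun ω => wip lam (Y ω - v) w) μ := by
  have : (fun ω => wip lam (Y ω - v) w) = fun ω =>
      ∑ k, (lam k * w k * (Y ω k) - lam k * v k * w k) := by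
    funext ω; unfold wip; exact Finset.sum_congr rfl fun k _ => by simp [Pi.sub_apply]; ring
  rw [this]
  refine integrable_finset_sum _ fun k _ => ?_
  exact ((integrable_comp hlam hYmeas hY2 k).const_mul _).sub (integrable_const _)

lemma integrable_Y [IsFiniteMeasure μ] (hlam : ∀ i, 0 < lam i) (hYmeas : Measurable Y)
    (hY2 : Integrable (fun ω => wnormSq lam (Y ω)) μ) : Integrable Y μ := by
  refine (integrable_finset_sum (μ := μ) Finset.univ
      (f := fun k ω => |Y ω k|) (fun k _ => (integrable_comp hlam hYmeas hY2 k).abs)).mono'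
    hYmeas.aestronglyMeasurable (Filter.Eventually.of_forall fun ω => ?_)
  have hnn : (0:ℝ) ≤ ∑ k, |Y ω k| := Finset.sum_nonneg fun k _ => abs_nonneg _
  refine pi_norm_le_iff_of_nonneg hnn |>.mpr fun k => ?_
  rw [Real.norm_eq_abs]
  exact Finset.single_le_sum (fun i _ => abs_nonneg (Y ω i)) (Finset.mem_univ k)

lemma bddBelow_wnormSq (hlam : ∀ i, 0 < lam i) (y : Fin m → ℝ) :
    BddBelow (Set.range fun i => wnormSq lam (y - Γ i)) :=
  ⟨0, by rintro x ⟨i, rfl⟩; exact wnormSq_nonneg hlam _⟩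

lemma iInf_wnormSq_le (hlam : ∀ i, 0 < lam i) (y : Fin m → ℝ) (j : Fin ℓ) :
    (⨅ i, wnormSq lam (y - Γ i)) ≤ wnormSq lam (y - Γ j) :=
  ciInf_le (bddBelow_wnormSq hlam y) j

lemma iInf_wnormSq_nonneg (hlam : ∀ i, 0 < lam i) (y : Fin m → ℝ) :
    0 ≤ ⨅ i, wnormSq lam (y - Γ i) :=
  le_ciInf fun i => wnormSq_nonneg hlam _

lemma iInf_wnormSq_eq_idx (hlam : ∀ i, 0 < lam i) (y : Fin m → ℝ) :
    (⨅ i, wnormSq lam (y - Γ i)) = wnormSq lam (y - Γ (idx lam Γ y)) := by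
  refine le_antisymm (iInf_wnormSq_le hlam y _) (le_ciInf fun i => ?_)
  exact wnormSq_le_of_wnorm_le hlam (idx_min y i)

lemma measurable_g (hYmeas : Measurable Y) :
    Measurable fun ω => ⨅ i, wnormSq lam (Y ω - Γ i) :=
  Measurable.iInf fun i => (continuous_wnormSq_sub (Γ i)).measurable.comp hYmeas

lemma integrable_g [IsFiniteMeasure μ] (hlam : ∀ i, 0 < lam i) (hYmeas : Measurable Y)
    (hY2 : Integrable (fun ω => wnormSq lam (Y ω)) μ) :
    Integrable (fun ω => ⨅ i, wnormSq lam (Y ω - Γ i)) μ := by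
  refine (integrable_wnormSq_sub hlam hYmeas hY2 (Γ 0)).mono'
    (measurable_g hYmeas).aestronglyMeasurable (Filter.Eventually.of_forall fun ω => ?_)
  rw [Real.norm_eq_abs, abs_of_nonneg (iInf_wnormSq_nonneg hlam _)]
  exact iInf_wnormSq_le hlam _ 0

lemma quantErr_eq (hlam : ∀ i, 0 < lam i) (Δ : Fin ℓ → Fin m → ℝ) :
    quantErr lam Δ μ Y = Real.sqrt (∫ ω, ⨅ i, wnormSq lam (Y ω - Δ i) ∂μ) := by
  unfold quantErr
  congr 1
  refine integral_congr_ae (Filter.Eventually.of_forall fun ω => ?_)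
  exact iInf_congr fun i => sq_wnorm hlam _

end OQ

namespace OQ

variable {m ℓ : ℕ} [NeZero ℓ] {lam : Fin m → ℝ} {Γ : Fin ℓ → Fin m → ℝ}
variable {Ω : Type*} [MeasurableSpace Ω] {μ : Measure Ω} {Y : Ω → Fin m → ℝ}

lemma centroid [IsProbabilityMeasure μ] (hlam : ∀ i, 0 < lam i) (hYmeas : Measurable Y)
    (hY2 : Integrable (fun ω => wnormSq lam (Y ω)) μ)
    (hopt : ∀ Γ' : Fin ℓ → Fin m → ℝ, quantErr lam Γ μ Y ≤ quantErr lam Γ' μ Y) (j : Fin ℓ) :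
    ∫ ω in (fun ω => idx lam Γ (Y ω)) ⁻¹' {j}, Y ω ∂μ
      = (μ ((fun ω => idx lam Γ (Y ω)) ⁻¹' {j})).toReal • Γ j := by
  classical
  set S : Set Ω := (fun ω => idx lam Γ (Y ω)) ⁻¹' {j} with hSdef
  have hS : MeasurableSet S := (measurable_idx.comp hYmeas) (measurableSet_singleton j)
  by_cases h0 : μ S = 0
  · rw [Measure.restrict_eq_zero.mpr h0, h0]
    simp
  set p : ℝ := (μ S).toReal with hpdef
  have hp : 0 < p := ENNReal.toReal_pos h0 (measure_ne_top μ S)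
  have hIntY : Integrable Y μ := integrable_Y hlam hYmeas hY2
  set c : Fin m → ℝ := p⁻¹ • ∫ ω in S, Y ω ∂μ with hcdef
  suffices hc : c = Γ j by
    rw [← hc, hcdef, smul_inv_smul₀ hp.ne']
  by_contra hc
  have hcomp : ∀ k, ∫ ω in S, Y ω k ∂μ = (∫ ω in S, Y ω ∂μ) k := fun k =>
    (ContinuousLinearMap.proj (R := ℝ) (φ := fun _ : Fin m => ℝ) k).integral_comp_comm
      hIntY.integrableOn
  have hIk : ∀ k, ∫ ω in S, (Y ω k - c k) ∂μ = 0 := by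
    intro k
    rw [integral_sub (integrable_comp hlam hYmeas hY2 k).integrableOn
      (integrable_const _).integrableOn, setIntegral_const, hcomp k, hcdef]
    simp only [Pi.smul_apply, smul_eq_mul]
    field_simp
    simp [hpdef, measureReal_def]
  have hwip0 : ∫ ω in S, wip lam (Y ω - c) (c - Γ j) ∂μ = 0 := by
    have hrw : (fun ω => wip lam (Y ω - c) (c - Γ j)) =
        fun ω => ∑ k, (lam k * (c - Γ j) k) * (Y ω k - c k) := by
      funext ω; unfold wip
      exact Finset.sum_congr rfl fun k _ => by simp only [Pi.sub_apply]; ring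
    rw [hrw, integral_finset_sum]
    · exact Finset.sum_eq_zero fun k _ => by rw [integral_const_mul, hIk k, mul_zero]
    · intro k _
      exact (((integrable_comp hlam hYmeas hY2 k).sub
        (integrable_const _)).const_mul _).integrableOn
  have hId : ∀ ω, wnormSq lam (Y ω - Γ j) =
      wnormSq lam (Y ω - c) + 2 * wip lam (Y ω - c) (c - Γ j) + wnormSq lam (c - Γ j) := by
    intro ω
    have h := wnormSq_add (lam := lam) (Y ω - c) (c - Γ j)
    rw [sub_add_sub_cancel] at h
    exact h
  have hIS : ∫ ω in S, wnormSq lam (Y ω - Γ j) ∂μ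
      = ∫ ω in S, wnormSq lam (Y ω - c) ∂μ + p * wnormSq lam (c - Γ j) := by
    have h1 : ∫ ω in S, wnormSq lam (Y ω - Γ j) ∂μ
        = ∫ ω in S, (wnormSq lam (Y ω - c) + 2 * wip lam (Y ω - c) (c - Γ j)
            + wnormSq lam (c - Γ j)) ∂μ :=
      integral_congr_ae (Filter.Eventually.of_forall fun ω => hId ω)
    have hA : IntegrableOn (fun ω => wnormSq lam (Y ω - c)) S μ :=
      (integrable_wnormSq_sub hlam hYmeas hY2 c).integrableOn
    have hB : IntegrableOn (fun ω => 2 * wip lam (Y ω - c) (c - Γ j)) S μ := by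
      exact ((integrable_wip_sub hlam hYmeas hY2 c (c - Γ j)).const_mul 2).integrableOn
    have hadd1 : ∫ ω in S, (wnormSq lam (Y ω - c) + 2 * wip lam (Y ω - c) (c - Γ j)
          + wnormSq lam (c - Γ j)) ∂μ
        = ∫ ω in S, (wnormSq lam (Y ω - c) + 2 * wip lam (Y ω - c) (c - Γ j)) ∂μ
          + ∫ ω in S, wnormSq lam (c - Γ j) ∂μ :=
      integral_add (by exact hA.add hB) (integrable_const _).integrableOn
    have hadd2 : ∫ ω in S, (wnormSq lam (Y ω - c) + 2 * wip lam (Y ω - c) (c - Γ j)) ∂μ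
        = ∫ ω in S, wnormSq lam (Y ω - c) ∂μ
          + ∫ ω in S, 2 * wip lam (Y ω - c) (c - Γ j) ∂μ :=
      integral_add hA hB
    rw [h1, hadd1, hadd2, integral_const_mul, hwip0, setIntegral_const, smul_eq_mul]
    simp only [hpdef, measureReal_def]
    ring
  set Γ' : Fin ℓ → Fin m → ℝ := Function.update Γ j c with hΓ'
  have hup_j : Γ' j = c := Function.update_self j c Γ
  have hup_ne : ∀ k, k ≠ j → Γ' k = Γ k := fun k hk => Function.update_of_ne hk c Γ
  have hgInt : Integrable (fun ω => ⨅ i, wnormSq lam (Y ω - Γ i)) μ :=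
    integrable_g hlam hYmeas hY2
  have hg'Int : Integrable (fun ω => ⨅ i, wnormSq lam (Y ω - Γ' i)) μ :=
    integrable_g (Γ := Γ') hlam hYmeas hY2
  have hgS : ∫ ω in S, (⨅ i, wnormSq lam (Y ω - Γ i)) ∂μ
      = ∫ ω in S, wnormSq lam (Y ω - Γ j) ∂μ := by
    refine setIntegral_congr_fun hS fun ω hω => ?_
    have hωj : idx lam Γ (Y ω) = j := hω
    rw [iInf_wnormSq_eq_idx hlam, hωj]
  have h2 : ∫ ω in S, (⨅ i, wnormSq lam (Y ω - Γ' i)) ∂μ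
      ≤ ∫ ω in S, wnormSq lam (Y ω - c) ∂μ := by
    refine setIntegral_mono_on hg'Int.integrableOn
      (integrable_wnormSq_sub hlam hYmeas hY2 c).integrableOn hS fun ω _ => ?_
    have h := iInf_wnormSq_le (Γ := Γ') hlam (Y ω) j
    rwa [hup_j] at h
  have h3 : ∫ ω in Sᶜ, (⨅ i, wnormSq lam (Y ω - Γ' i)) ∂μ
      ≤ ∫ ω in Sᶜ, (⨅ i, wnormSq lam (Y ω - Γ i)) ∂μ := by
    refine setIntegral_mono_on hg'Int.integrableOn hgInt.integrableOn hS.compl fun ω hω => ?_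
    have hωj : idx lam Γ (Y ω) ≠ j := by simpa [hSdef] using hω
    have h4 := iInf_wnormSq_le (Γ := Γ') hlam (Y ω) (idx lam Γ (Y ω))
    rw [hup_ne _ hωj] at h4
    calc (⨅ i, wnormSq lam (Y ω - Γ' i)) ≤ wnormSq lam (Y ω - Γ (idx lam Γ (Y ω))) := h4
    _ = ⨅ i, wnormSq lam (Y ω - Γ i) := (iInf_wnormSq_eq_idx hlam (Y ω)).symm
  have hpos : 0 < p * wnormSq lam (c - Γ j) :=
    mul_pos hp (wnormSq_pos hlam (sub_ne_zero.mpr hc))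
  have hlt : ∫ ω, (⨅ i, wnormSq lam (Y ω - Γ' i)) ∂μ
      < ∫ ω, (⨅ i, wnormSq lam (Y ω - Γ i)) ∂μ := by
    calc ∫ ω, (⨅ i, wnormSq lam (Y ω - Γ' i)) ∂μ
        = ∫ ω in S, (⨅ i, wnormSq lam (Y ω - Γ' i)) ∂μ
          + ∫ ω in Sᶜ, (⨅ i, wnormSq lam (Y ω - Γ' i)) ∂μ :=
          (integral_add_compl hS hg'Int).symm
    _ ≤ ∫ ω in S, wnormSq lam (Y ω - c) ∂μ
          + ∫ ω in Sᶜ, (⨅ i, wnormSq lam (Y ω - Γ i)) ∂μ := add_le_add h2 h3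
    _ = (∫ ω in S, wnormSq lam (Y ω - Γ j) ∂μ - p * wnormSq lam (c - Γ j))
          + ∫ ω in Sᶜ, (⨅ i, wnormSq lam (Y ω - Γ i)) ∂μ := by rw [hIS]; ring
    _ = (∫ ω in S, (⨅ i, wnormSq lam (Y ω - Γ i)) ∂μ - p * wnormSq lam (c - Γ j))
          + ∫ ω in Sᶜ, (⨅ i, wnormSq lam (Y ω - Γ i)) ∂μ := by rw [hgS]
    _ < ∫ ω in S, (⨅ i, wnormSq lam (Y ω - Γ i)) ∂μ
          + ∫ ω in Sᶜ, (⨅ i, wnormSq lam (Y ω - Γ i)) ∂μ := by linarith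
    _ = ∫ ω, (⨅ i, wnormSq lam (Y ω - Γ i)) ∂μ := integral_add_compl hS hgInt
  have hqlt : quantErr lam Γ' μ Y < quantErr lam Γ μ Y := by
    rw [quantErr_eq hlam, quantErr_eq hlam]
    exact Real.sqrt_lt_sqrt
      (integral_nonneg fun ω => iInf_wnormSq_nonneg (Γ := Γ') hlam _) hlt
  exact absurd (hopt Γ') (not_le.mpr hqlt)

end OQ

/-- **Optimal quantization (Kieffer, Cuesta-Albertos).** If `Γ*` minimizes the quantization
error, then `q_{Γ*} ∘ Y = E[Y ∣ σ(q_{Γ*} ∘ Y)]` almost surely. -/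
theorem optimal_quantization_condexp
    {Ω : Type*} [MeasurableSpace Ω] (μ : Measure Ω) [IsProbabilityMeasure μ]
    {m ℓ : ℕ} [NeZero ℓ] (lam : Fin m → ℝ) (hlam : ∀ i, 0 < lam i)
    (Y : Ω → Fin m → ℝ) (hYmeas : Measurable Y)
    (hY2 : Integrable (fun ω => wnormSq lam (Y ω)) μ)
    (Γs : Fin ℓ → Fin m → ℝ)
    (hopt : ∀ Γ : Fin ℓ → Fin m → ℝ, quantErr lam Γs μ Y ≤ quantErr lam Γ μ Y) :
    (fun ω => q lam Γs (Y ω)) =ᵐ[μ]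
      μ[Y | MeasurableSpace.comap (fun ω => q lam Γs (Y ω)) inferInstance] := by
  classical
  have hQmeas : Measurable fun ω => q lam Γs (Y ω) := OQ.measurable_q.comp hYmeas
  have hm : MeasurableSpace.comap (fun ω => q lam Γs (Y ω)) inferInstance ≤ _ :=
    hQmeas.comap_le
  have hIntY : Integrable Y μ := OQ.integrable_Y hlam hYmeas hY2
  have hQInt : Integrable (fun ω => q lam Γs (Y ω)) μ := by
    refine (integrable_const (Finset.univ.sup' ⟨0, Finset.mem_univ (0 : Fin ℓ)⟩
        fun i => ‖Γs i‖)).mono' hQmeas.aestronglyMeasurable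
      (Filter.Eventually.of_forall fun ω => ?_)
    exact Finset.le_sup' (f := fun i => ‖Γs i‖) (Finset.mem_univ _)
  set S : Fin ℓ → Set Ω := fun j => (fun ω => OQ.idx lam Γs (Y ω)) ⁻¹' {j} with hSdef
  have hSmeas : ∀ j, MeasurableSet (S j) :=
    fun j => (OQ.measurable_idx.comp hYmeas) (measurableSet_singleton j)
  have hcent : ∀ j, ∫ ω in S j, Y ω ∂μ = (μ (S j)).toReal • Γs j :=
    fun j => OQ.centroid hlam hYmeas hY2 hopt j
  refine ae_eq_condExp_of_forall_setIntegral_eq hm hIntY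
    (fun s _ _ => hQInt.integrableOn) ?_ ?_
  · rintro s hs -
    obtain ⟨B, hB, rfl⟩ := hs
    have hdecomp : (fun ω => q lam Γs (Y ω)) ⁻¹' B
        = ⋃ j ∈ Finset.univ.filter fun j => Γs j ∈ B, S j := by
      ext ω
      simp only [Set.mem_preimage, Set.mem_iUnion, Finset.mem_filter, Finset.mem_univ,
        true_and, hSdef, Set.mem_singleton_iff, OQ.q_eq]
      constructor
      · intro h
        exact ⟨OQ.idx lam Γs (Y ω), h, rfl⟩
      · rintro ⟨j, hj, h⟩
        rw [h]; exact hj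
    have hdisj : Set.Pairwise ↑(Finset.univ.filter fun j => Γs j ∈ B) (Function.onFun Disjoint S) := by
      intro i _ j _ hij
      refine Set.disjoint_left.mpr fun ω h1 h2 => hij ?_
      have h1' : OQ.idx lam Γs (Y ω) = i := h1
      have h2' : OQ.idx lam Γs (Y ω) = j := h2
      exact h1'.symm.trans h2'
    rw [hdecomp,
      integral_biUnion_finset _ (fun i _ => hSmeas i) hdisj (fun i _ => hQInt.integrableOn),
      integral_biUnion_finset _ (fun i _ => hSmeas i) hdisj (fun i _ => hIntY.integrableOn)]
    refine Finset.sum_congr rfl fun j _ => ?_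
    have h1 : ∫ ω in S j, q lam Γs (Y ω) ∂μ = ∫ ω in S j, Γs j ∂μ := by
      refine setIntegral_congr_fun (hSmeas j) fun ω hω => ?_
      have hωj : OQ.idx lam Γs (Y ω) = j := hω
      rw [OQ.q_eq, hωj]
    rw [h1, setIntegral_const, hcent j, measureReal_def]
  · exact (Measurable.stronglyMeasurable
      ((measurable_iff_comap_le (m₁ := MeasurableSpace.comap (fun ω => q lam Γs (Y ω))
        inferInstance)).mpr le_rfl)).aestronglyMeasurable
end
end

section
/- Let (Ω, F₀, P) be a probability space, m, ℓ ∈ ℕ with ℓ ≥ 1, λ positive weights on ℝ^m, and Y : Ω → ℝ^m measurable with E[‖Y‖_λ²] < ∞. Suppose Γ* = (γ*₁,…,γ*_ℓ) ∈ (ℝ^m)^ℓ minimizes the quantization error e(Γ) over all tuples Γ ∈ (ℝ^m)^ℓ. Then for every index i ∈ {1,…,ℓ} such that P(q_{Γ*}(Y) = γ*ᵢ) > 0, the conditional mean of Y on the Voronoi cell of γ*ᵢ equals γ*ᵢ: E[Y · 1{q_{Γ*}(Y) = γ*ᵢ}] / P(q_{Γ*}(Y) = γ*ᵢ) = γ*ᵢ.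 -/
open MeasureTheory Finset

noncomputable section

-- ===== aux =====
namespace OQC

variable {m ℓ : ℕ}

lemma wnormSq_def (lam y : Fin m → ℝ) : wnormSq lam y = ∑ k, lam k * y k * y k := rfl

lemma wnormSq_nonneg {lam : Fin m → ℝ} (hlam : ∀ i, 0 < lam i) (y : Fin m → ℝ) :
    0 ≤ wnormSq lam y := by
  rw [wnormSq_def]
  exact Finset.sum_nonneg fun k _ => by
    rw [mul_assoc]; exact mul_nonneg (hlam k).le (mul_self_nonneg _)

lemma wnorm_sq {lam : Fin m → ℝ} (hlam : ∀ i, 0 < lam i) (y : Fin m → ℝ) :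
    wnorm lam y ^ 2 = wnormSq lam y :=
  Real.sq_sqrt (wnormSq_nonneg hlam y)

lemma wip_sub_right (lam y a b : Fin m → ℝ) :
    wip lam y (a - b) = wip lam y a - wip lam y b := by
  unfold wip
  rw [← Finset.sum_sub_distrib]
  exact Finset.sum_congr rfl fun k _ => by simp [Pi.sub_apply]; ring

lemma wnormSq_sub_expand (lam y c : Fin m → ℝ) :
    wnormSq lam (y - c) = wnormSq lam y - 2 * wip lam y c + wnormSq lam c := by
  unfold wnormSq wip
  rw [Finset.mul_sum, ← Finset.sum_sub_distrib, ← Finset.sum_add_distrib]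
  exact Finset.sum_congr rfl fun k _ => by simp [Pi.sub_apply]; ring

lemma wnormSq_sub_le {lam : Fin m → ℝ} (hlam : ∀ i, 0 < lam i) (a b : Fin m → ℝ) :
    wnormSq lam (a - b) ≤ 2 * wnormSq lam a + 2 * wnormSq lam b := by
  have h : ∀ k ∈ Finset.univ (α := Fin m),
      lam k * (a - b) k * (a - b) k
        ≤ 2 * (lam k * a k * a k) + 2 * (lam k * b k * b k) := by
    intro k _
    have hk := (hlam k).le
    simp only [Pi.sub_apply]
    nlinarith [mul_self_nonneg (a k + b k), mul_nonneg hk (mul_self_nonneg (a k + b k))]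
  calc wnormSq lam (a - b) = ∑ k, lam k * (a - b) k * (a - b) k := rfl
    _ ≤ ∑ k, (2 * (lam k * a k * a k) + 2 * (lam k * b k * b k)) := Finset.sum_le_sum h
    _ = 2 * wnormSq lam a + 2 * wnormSq lam b := by
        rw [Finset.sum_add_distrib, ← Finset.mul_sum, ← Finset.mul_sum]; rfl

lemma continuous_wnorm_sub (lam c : Fin m → ℝ) :
    Continuous fun y : Fin m → ℝ => wnorm lam (y - c) := by
  apply Real.continuous_sqrt.comp
  unfold wnormSq wip
  refine continuous_finset_sum _ fun k _ => ?_
  simp only [Pi.sub_apply]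
  fun_prop

def idx [NeZero ℓ] (lam : Fin m → ℝ) (Γ : Fin ℓ → Fin m → ℝ) (y : Fin m → ℝ) : Fin ℓ :=
  (minimizers lam Γ y).min' (minimizers_nonempty lam Γ y)

lemma q_eq [NeZero ℓ] (lam : Fin m → ℝ) (Γ : Fin ℓ → Fin m → ℝ) (y : Fin m → ℝ) :
    q lam Γ y = Γ (idx lam Γ y) := rfl

lemma idx_min [NeZero ℓ] (lam : Fin m → ℝ) (Γ : Fin ℓ → Fin m → ℝ) (y : Fin m → ℝ) (j : Fin ℓ) :
    wnorm lam (y - Γ (idx lam Γ y)) ≤ wnorm lam (y - Γ j) := by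
  have := Finset.min'_mem (minimizers lam Γ y) (minimizers_nonempty lam Γ y)
  simp only [minimizers, Finset.mem_filter] at this
  exact this.2 j

lemma iInf_eq_idx [NeZero ℓ] (lam : Fin m → ℝ) (Γ : Fin ℓ → Fin m → ℝ) (y : Fin m → ℝ) :
    (⨅ j, wnorm lam (y - Γ j) ^ 2) = wnorm lam (y - Γ (idx lam Γ y)) ^ 2 := by
  haveI : Nonempty (Fin ℓ) := ⟨0⟩
  refine le_antisymm (ciInf_le (Finite.bddBelow_range _) _) (le_ciInf fun j => ?_)
  exact pow_le_pow_left₀ (Real.sqrt_nonneg _) (idx_min lam Γ y j) 2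

lemma iInf_nonneg' [NeZero ℓ] (lam : Fin m → ℝ) (Γ : Fin ℓ → Fin m → ℝ) (y : Fin m → ℝ) :
    0 ≤ ⨅ j, wnorm lam (y - Γ j) ^ 2 := by
  haveI : Nonempty (Fin ℓ) := ⟨0⟩
  exact le_ciInf fun j => sq_nonneg _

lemma idx_eq_iff [NeZero ℓ] (lam : Fin m → ℝ) (Γ : Fin ℓ → Fin m → ℝ) (y : Fin m → ℝ)
    (k : Fin ℓ) :
    idx lam Γ y = k ↔ k ∈ minimizers lam Γ y ∧ ∀ j ∈ minimizers lam Γ y, k ≤ j := by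
  constructor
  · rintro rfl
    exact ⟨Finset.min'_mem _ _, fun j hj => Finset.min'_le _ _ hj⟩
  · rintro ⟨hk, hmin⟩
    exact le_antisymm (Finset.min'_le _ _ hk) (hmin _ (Finset.min'_mem _ _))

lemma measurable_idx [NeZero ℓ] (lam : Fin m → ℝ) (Γ : Fin ℓ → Fin m → ℝ) :
    Measurable (idx lam Γ) := by
  apply measurable_to_countable'
  intro k
  have hM : ∀ j : Fin ℓ, MeasurableSet {y : Fin m → ℝ | j ∈ minimizers lam Γ y} := by
    intro j
    have : {y : Fin m → ℝ | j ∈ minimizers lam Γ y}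
        = ⋂ j', {y : Fin m → ℝ | wnorm lam (y - Γ j) ≤ wnorm lam (y - Γ j')} := by
      ext y; simp [minimizers, Set.mem_iInter]
    rw [this]
    exact MeasurableSet.iInter fun j' =>
      measurableSet_le (continuous_wnorm_sub lam (Γ j)).measurable
        (continuous_wnorm_sub lam (Γ j')).measurable
  have : idx lam Γ ⁻¹' {k}
      = {y | k ∈ minimizers lam Γ y} ∩ ⋂ j, {y | j ∈ minimizers lam Γ y → k ≤ j} := by
    ext y
    simp only [Set.mem_preimage, Set.mem_singleton_iff, Set.mem_inter_iff, Set.mem_iInter,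
      Set.mem_setOf_eq, idx_eq_iff]
  rw [this]
  refine (hM k).inter (MeasurableSet.iInter fun j => ?_)
  by_cases hkj : k ≤ j
  · have : {y : Fin m → ℝ | j ∈ minimizers lam Γ y → k ≤ j} = Set.univ := by
      ext y; simp [hkj]
    rw [this]; exact MeasurableSet.univ
  · have : {y : Fin m → ℝ | j ∈ minimizers lam Γ y → k ≤ j}
        = {y : Fin m → ℝ | j ∈ minimizers lam Γ y}ᶜ := by
      ext y; simp [hkj]
    rw [this]; exact (hM j).compl

lemma measurable_q [NeZero ℓ] (lam : Fin m → ℝ) (Γ : Fin ℓ → Fin m → ℝ) :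
    Measurable (q lam Γ) :=
  measurable_from_top.comp (measurable_idx lam Γ)

end OQC

namespace OQC

lemma wip_smul_left {m : ℕ} (lam : Fin m → ℝ) (t : ℝ) (y d : Fin m → ℝ) :
    wip lam (t • y) d = t * wip lam y d := by
  unfold wip
  rw [Finset.mul_sum]
  exact Finset.sum_congr rfl fun k _ => by simp [Pi.smul_apply, smul_eq_mul]; ring

lemma continuous_wnormSq_sub {m : ℕ} (lam c : Fin m → ℝ) :
    Continuous fun y : Fin m → ℝ => wnormSq lam (y - c) := by
  unfold wnormSq wip
  refine continuous_finset_sum _ fun k _ => ?_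
  simp only [Pi.sub_apply]
  fun_prop

end OQC


/-- **Optimal quantization: centroid property.** If `Γ*` minimizes the quantization error,
then for every cell of positive probability, the conditional mean of `Y` on the Voronoi
cell of `γ*ᵢ` equals `γ*ᵢ`. -/
theorem optimal_quantization_centroid
    {Ω : Type*} [MeasurableSpace Ω] (μ : Measure Ω) [IsProbabilityMeasure μ]
    {m ℓ : ℕ} [NeZero ℓ] (lam : Fin m → ℝ) (hlam : ∀ i, 0 < lam i)
    (Y : Ω → Fin m → ℝ) (hYmeas : Measurable Y)
    (hY2 : Integrable (fun ω => wnormSq lam (Y ω)) μ)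
    (Γs : Fin ℓ → Fin m → ℝ)
    (hopt : ∀ Γ : Fin ℓ → Fin m → ℝ, quantErr lam Γs μ Y ≤ quantErr lam Γ μ Y)
    (i : Fin ℓ) (hpos : 0 < μ {ω | q lam Γs (Y ω) = Γs i}) :
    (μ {ω | q lam Γs (Y ω) = Γs i}).toReal⁻¹ •
      (∫ ω in {ω | q lam Γs (Y ω) = Γs i}, Y ω ∂μ) = Γs i := by
  classical
  haveI : Nonempty (Fin ℓ) := ⟨0⟩
  set A : Set Ω := {ω | q lam Γs (Y ω) = Γs i} with hA_def
  have hA : MeasurableSet A := by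
    have : A = Y ⁻¹' (q lam Γs ⁻¹' {Γs i}) := rfl
    rw [this]
    exact hYmeas ((OQC.measurable_q lam Γs) (measurableSet_singleton _))
  set μA : ℝ := (μ A).toReal with hμA_def
  have hμA_pos : 0 < μA := ENNReal.toReal_pos hpos.ne' (measure_ne_top μ A)
  set b : Fin m → ℝ := μA⁻¹ • (∫ ω in A, Y ω ∂μ) with hb_def
  -- integrability facts
  have hintSub : ∀ c : Fin m → ℝ, Integrable (fun ω => wnormSq lam (Y ω - c)) μ := by
    intro c
    refine Integrable.mono' ((hY2.const_mul 2).add (integrable_const (2 * wnormSq lam c)))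
      (((OQC.continuous_wnormSq_sub lam c).measurable.comp hYmeas).aestronglyMeasurable)
      (ae_of_all _ fun ω => ?_)
    rw [Real.norm_eq_abs, abs_of_nonneg (OQC.wnormSq_nonneg hlam _)]
    exact OQC.wnormSq_sub_le hlam _ _
  have hYk2 : ∀ k, Integrable (fun ω => Y ω k * Y ω k) μ := by
    intro k
    refine Integrable.mono' (hY2.const_mul (lam k)⁻¹)
      ((((measurable_pi_apply k).comp hYmeas).mul
        ((measurable_pi_apply k).comp hYmeas)).aestronglyMeasurable)
      (ae_of_all _ fun ω => ?_)
    rw [Real.norm_eq_abs, abs_of_nonneg (mul_self_nonneg _)]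
    have h1 : lam k * (Y ω k * Y ω k) ≤ wnormSq lam (Y ω) := by
      rw [OQC.wnormSq_def, ← mul_assoc]
      exact Finset.single_le_sum (f := fun j => lam j * Y ω j * Y ω j)
        (fun j _ => by
          show (0:ℝ) ≤ lam j * Y ω j * Y ω j
          rw [mul_assoc]; exact mul_nonneg (hlam j).le (mul_self_nonneg _))
        (Finset.mem_univ k)
    calc Y ω k * Y ω k = (lam k)⁻¹ * (lam k * (Y ω k * Y ω k)) := by
          rw [← mul_assoc, inv_mul_cancel₀ (hlam k).ne', one_mul]
      _ ≤ (lam k)⁻¹ * wnormSq lam (Y ω) :=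
          mul_le_mul_of_nonneg_left h1 (inv_nonneg.mpr (hlam k).le)
  have hYk1 : ∀ k, Integrable (fun ω => Y ω k) μ := by
    intro k
    refine Integrable.mono' ((integrable_const (1 : ℝ)).add (hYk2 k))
      (((measurable_pi_apply k).comp hYmeas).aestronglyMeasurable)
      (ae_of_all _ fun ω => ?_)
    rw [Real.norm_eq_abs]
    simp only [Pi.add_apply]
    nlinarith [abs_mul_abs_self (Y ω k), mul_self_nonneg (|Y ω k| - 1), abs_nonneg (Y ω k)]
  have hYint : Integrable Y μ := by
    refine Integrable.mono'
      (integrable_finset_sum Finset.univ (fun k _ => (hYk1 k).abs))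
      hYmeas.aestronglyMeasurable (ae_of_all _ fun ω => ?_)
    refine (pi_norm_le_iff_of_nonneg (Finset.sum_nonneg fun k _ => abs_nonneg _)).2 fun k => ?_
    rw [Real.norm_eq_abs]
    exact Finset.single_le_sum (f := fun j => |Y ω j|) (fun j _ => abs_nonneg _)
      (Finset.mem_univ k)
  have hYintOn : IntegrableOn Y A μ := hYint.integrableOn
  have hmeasInf : ∀ Γ : Fin ℓ → Fin m → ℝ,
      Measurable fun ω => ⨅ j, wnorm lam (Y ω - Γ j) ^ 2 := fun Γ =>
    Measurable.iInf fun j =>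
      (((OQC.continuous_wnorm_sub lam (Γ j)).pow 2).measurable).comp hYmeas
  have hintInf : ∀ Γ : Fin ℓ → Fin m → ℝ,
      Integrable (fun ω => ⨅ j, wnorm lam (Y ω - Γ j) ^ 2) μ := by
    intro Γ
    refine Integrable.mono' (hintSub (Γ 0)) (hmeasInf Γ).aestronglyMeasurable
      (ae_of_all _ fun ω => ?_)
    rw [Real.norm_eq_abs, abs_of_nonneg (OQC.iInf_nonneg' lam Γ _)]
    calc (⨅ j, wnorm lam (Y ω - Γ j) ^ 2) ≤ wnorm lam (Y ω - Γ 0) ^ 2 :=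
        ciInf_le (Finite.bddBelow_range _) 0
      _ = wnormSq lam (Y ω - Γ 0) := OQC.wnorm_sq hlam _
  -- evaluation of vector-valued integral
  have hEval : ∀ k, (∫ ω in A, Y ω ∂μ) k = ∫ ω in A, Y ω k ∂μ := by
    intro k
    have := (ContinuousLinearMap.proj (R := ℝ) (φ := fun _ : Fin m => ℝ) k).integral_comp_comm
      hYintOn
    simpa using this.symm
  have hwipInt : ∀ d : Fin m → ℝ,
      ∫ ω in A, wip lam (Y ω) d ∂μ = wip lam (∫ ω in A, Y ω ∂μ) d := by
    intro d
    have h1 : ∀ k ∈ Finset.univ (α := Fin m),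
        Integrable (fun ω => lam k * Y ω k * d k) (μ.restrict A) :=
      fun k _ => ((hYk1 k).integrableOn.const_mul (lam k)).mul_const (d k)
    calc ∫ ω in A, wip lam (Y ω) d ∂μ = ∫ ω in A, ∑ k, lam k * Y ω k * d k ∂μ := rfl
      _ = ∑ k, ∫ ω in A, lam k * Y ω k * d k ∂μ := integral_finset_sum _ h1
      _ = ∑ k, lam k * (∫ ω in A, Y ω ∂μ) k * d k := by
          refine Finset.sum_congr rfl fun k _ => ?_
          rw [integral_mul_const, integral_const_mul, hEval k]
      _ = wip lam (∫ ω in A, Y ω ∂μ) d := rfl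
  have hbInt : ∫ ω in A, Y ω ∂μ = μA • b := (smul_inv_smul₀ hμA_pos.ne' _).symm
  -- key identity
  have hkey : ∫ ω in A, wnormSq lam (Y ω - Γs i) ∂μ
      = (∫ ω in A, wnormSq lam (Y ω - b) ∂μ) + μA * wnormSq lam (b - Γs i) := by
    have hdiff : ∀ ω, wnormSq lam (Y ω - Γs i) - wnormSq lam (Y ω - b)
        = 2 * wip lam (Y ω) (b - Γs i) + (wnormSq lam (Γs i) - wnormSq lam b) := by
      intro ω
      rw [OQC.wnormSq_sub_expand, OQC.wnormSq_sub_expand, OQC.wip_sub_right]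
      ring
    have hL : ∫ ω in A, (wnormSq lam (Y ω - Γs i) - wnormSq lam (Y ω - b)) ∂μ
        = (∫ ω in A, wnormSq lam (Y ω - Γs i) ∂μ) - ∫ ω in A, wnormSq lam (Y ω - b) ∂μ :=
      integral_sub (hintSub _).integrableOn (hintSub _).integrableOn
    have hwipIntble : Integrable (fun ω => wip lam (Y ω) (b - Γs i)) (μ.restrict A) :=
      integrable_finset_sum _ fun k _ =>
        ((hYk1 k).integrableOn.const_mul _).mul_const _
    have hR : ∫ ω in A, (2 * wip lam (Y ω) (b - Γs i)
          + (wnormSq lam (Γs i) - wnormSq lam b)) ∂μ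
        = 2 * wip lam (∫ ω in A, Y ω ∂μ) (b - Γs i)
          + μA * (wnormSq lam (Γs i) - wnormSq lam b) := by
      rw [integral_add (hwipIntble.const_mul 2) (integrable_const _), integral_const_mul,
        hwipInt, setIntegral_const, smul_eq_mul, Measure.real, ← hμA_def]
    have hfinal : 2 * wip lam (μA • b) (b - Γs i)
          + μA * (wnormSq lam (Γs i) - wnormSq lam b)
        = μA * wnormSq lam (b - Γs i) := by
      rw [OQC.wip_smul_left, OQC.wip_sub_right, OQC.wnormSq_sub_expand,
        show wip lam b b = wnormSq lam b from rfl]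
      ring
    have hcomb : (∫ ω in A, wnormSq lam (Y ω - Γs i) ∂μ)
          - (∫ ω in A, wnormSq lam (Y ω - b) ∂μ)
        = μA * wnormSq lam (b - Γs i) := by
      rw [← hL]
      calc ∫ ω in A, (wnormSq lam (Y ω - Γs i) - wnormSq lam (Y ω - b)) ∂μ
          = ∫ ω in A, (2 * wip lam (Y ω) (b - Γs i)
              + (wnormSq lam (Γs i) - wnormSq lam b)) ∂μ := by simp_rw [hdiff]
        _ = 2 * wip lam (∫ ω in A, Y ω ∂μ) (b - Γs i)
              + μA * (wnormSq lam (Γs i) - wnormSq lam b) := hR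
        _ = μA * wnormSq lam (b - Γs i) := by rw [hbInt]; exact hfinal
    linarith
  -- pointwise comparisons
  have hOnA : ∀ ω ∈ A, (⨅ j, wnorm lam (Y ω - Γs j) ^ 2) = wnormSq lam (Y ω - Γs i) := by
    intro ω hω
    have hq : Γs (OQC.idx lam Γs (Y ω)) = Γs i := hω
    rw [OQC.iInf_eq_idx, show (Y ω - Γs (OQC.idx lam Γs (Y ω))) = Y ω - Γs i by rw [hq]]
    exact OQC.wnorm_sq hlam _
  set Γ' : Fin ℓ → Fin m → ℝ := Function.update Γs i b with hΓ'
  have hOffA : ∀ ω ∉ A, (⨅ j, wnorm lam (Y ω - Γ' j) ^ 2)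
      ≤ ⨅ j, wnorm lam (Y ω - Γs j) ^ 2 := by
    intro ω hω
    have hne : Γs (OQC.idx lam Γs (Y ω)) ≠ Γs i := hω
    have hji : OQC.idx lam Γs (Y ω) ≠ i := fun h => hne (by rw [h])
    calc (⨅ j, wnorm lam (Y ω - Γ' j) ^ 2)
        ≤ wnorm lam (Y ω - Γ' (OQC.idx lam Γs (Y ω))) ^ 2 :=
          ciInf_le (Finite.bddBelow_range _) _
      _ = wnorm lam (Y ω - Γs (OQC.idx lam Γs (Y ω))) ^ 2 := by
          rw [hΓ', Function.update_of_ne hji]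
      _ = ⨅ j, wnorm lam (Y ω - Γs j) ^ 2 := (OQC.iInf_eq_idx _ _ _).symm
  have hOnA' : ∀ ω ∈ A, (⨅ j, wnorm lam (Y ω - Γ' j) ^ 2) ≤ wnormSq lam (Y ω - b) := by
    intro ω _
    calc (⨅ j, wnorm lam (Y ω - Γ' j) ^ 2) ≤ wnorm lam (Y ω - Γ' i) ^ 2 :=
        ciInf_le (Finite.bddBelow_range _) _
      _ = wnormSq lam (Y ω - b) := by
          rw [hΓ', Function.update_self]; exact OQC.wnorm_sq hlam _
  -- main inequality chain
  have hJnonneg : ∀ Γ : Fin ℓ → Fin m → ℝ,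
      0 ≤ ∫ ω, ⨅ j, wnorm lam (Y ω - Γ j) ^ 2 ∂μ := fun Γ =>
    integral_nonneg fun ω => OQC.iInf_nonneg' lam Γ _
  have hle : (∫ ω, ⨅ j, wnorm lam (Y ω - Γs j) ^ 2 ∂μ)
      ≤ ∫ ω, ⨅ j, wnorm lam (Y ω - Γ' j) ^ 2 ∂μ := by
    have h := hopt Γ'
    unfold quantErr at h
    calc (∫ ω, ⨅ j, wnorm lam (Y ω - Γs j) ^ 2 ∂μ)
        = Real.sqrt (∫ ω, ⨅ j, wnorm lam (Y ω - Γs j) ^ 2 ∂μ) ^ 2 :=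
          (Real.sq_sqrt (hJnonneg Γs)).symm
      _ ≤ Real.sqrt (∫ ω, ⨅ j, wnorm lam (Y ω - Γ' j) ^ 2 ∂μ) ^ 2 :=
          pow_le_pow_left₀ (Real.sqrt_nonneg _) h 2
      _ = ∫ ω, ⨅ j, wnorm lam (Y ω - Γ' j) ^ 2 ∂μ := Real.sq_sqrt (hJnonneg Γ')
  have hsplit : ∀ Γ : Fin ℓ → Fin m → ℝ,
      (∫ ω, ⨅ j, wnorm lam (Y ω - Γ j) ^ 2 ∂μ)
        = (∫ ω in A, ⨅ j, wnorm lam (Y ω - Γ j) ^ 2 ∂μ)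
          + ∫ ω in Aᶜ, ⨅ j, wnorm lam (Y ω - Γ j) ^ 2 ∂μ :=
    fun Γ => (integral_add_compl hA (hintInf Γ)).symm
  have h1 : (∫ ω in A, ⨅ j, wnorm lam (Y ω - Γ' j) ^ 2 ∂μ)
      ≤ ∫ ω in A, wnormSq lam (Y ω - b) ∂μ :=
    setIntegral_mono_on (hintInf Γ').integrableOn (hintSub b).integrableOn hA hOnA'
  have h2 : (∫ ω in Aᶜ, ⨅ j, wnorm lam (Y ω - Γ' j) ^ 2 ∂μ)
      ≤ ∫ ω in Aᶜ, ⨅ j, wnorm lam (Y ω - Γs j) ^ 2 ∂μ :=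
    setIntegral_mono_on (hintInf Γ').integrableOn (hintInf Γs).integrableOn hA.compl
      fun ω hω => hOffA ω hω
  have h3 : (∫ ω in A, ⨅ j, wnorm lam (Y ω - Γs j) ^ 2 ∂μ)
      = ∫ ω in A, wnormSq lam (Y ω - Γs i) ∂μ :=
    setIntegral_congr_fun hA hOnA
  have hcontr : μA * wnormSq lam (b - Γs i) ≤ 0 := by
    have h := hle
    rw [hsplit Γs, hsplit Γ', h3, hkey] at h
    linarith
  have hzero : wnormSq lam (b - Γs i) = 0 := by
    have hnn := OQC.wnormSq_nonneg hlam (b - Γs i)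
    nlinarith
  have hdzero : b - Γs i = 0 := by
    rw [OQC.wnormSq_def] at hzero
    funext k
    have hk := (Finset.sum_eq_zero_iff_of_nonneg (fun j _ => by
      rw [mul_assoc]; exact mul_nonneg (hlam j).le (mul_self_nonneg _))).mp hzero k
      (Finset.mem_univ k)
    rw [mul_assoc] at hk
    have := (mul_eq_zero.mp hk).resolve_left (hlam k).ne'
    simpa using mul_self_eq_zero.mp this
  exact sub_eq_zero.mp hdzero
end
end
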